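/- Let α be a positive root and set I_α = {α} ∪ {β ∈ Δ⁺ : α − β ∈ Δ⁺}. Then the subgroup ℤ·I_α of the root lattice generated by I_α contains every simple root belonging to Supp α; that is, Supp α ⊆ ℤ-span(I_α). -/

import Mathlib

open scoped RealInnerProductSpace

/-- Let `Δ` be a finite reduced crystallographic root system in a
finite-dimensional real inner product space `E`, with base (set of simple roots) `SR`
and positive roots `Δpos`.  For a positive root `α` with coefficients `k` on the base,
set `Iα = {α} ∪ {β ∈ Δ⁺ : α − β ∈ Δ⁺}`.  Then every simple root in `Supp α`
(i.e. every `δ ∈ SR` with `k δ > 0`) lies in the ℤ-span of `Iα`. -/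
theorem supp_subset_zspan_Ialpha
    {E : Type*} [NormedAddCommGroup E] [InnerProductSpace ℝ E] [FiniteDimensional ℝ E]
    (Δ : Finset E)
    (hne : ∀ α ∈ Δ, α ≠ (0 : E))
    (hcrys : ∀ α ∈ Δ, ∀ β ∈ Δ, ∃ n : ℤ, 2 * ⟪α, β⟫ / ⟪α, α⟫ = (n : ℝ))
    (hrefl : ∀ α ∈ Δ, ∀ β ∈ Δ, β - (2 * ⟪α, β⟫ / ⟪α, α⟫) • α ∈ Δ)
    (hred : ∀ α ∈ Δ, ∀ β ∈ Δ, (∃ c : ℝ, β = c • α) → β = α ∨ β = -α)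
    (SR : Finset E) (hSRΔ : SR ⊆ Δ)
    (hli : LinearIndependent ℝ (fun a : SR => (a : E)))
    (hbase : ∀ β ∈ Δ, ∃ k : E → ℤ,
      β = ∑ a ∈ SR, (k a : ℝ) • a ∧
        ((∀ a ∈ SR, 0 ≤ k a) ∨ (∀ a ∈ SR, k a ≤ 0)))
    (Δpos : Set E)
    (hΔpos : ∀ β, β ∈ Δpos ↔ β ∈ Δ ∧
      ∃ k : E → ℤ, β = ∑ a ∈ SR, (k a : ℝ) • a ∧ ∀ a ∈ SR, 0 ≤ k a)
    (α : E) (hα : α ∈ Δpos)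
    (k : E → ℤ) (hk : α = ∑ a ∈ SR, (k a : ℝ) • a)
    (Iα : Set E)
    (hIα : Iα = {α} ∪ {β : E | β ∈ Δpos ∧ α - β ∈ Δpos}) :
    ∀ δ ∈ SR, 0 < k δ → δ ∈ Submodule.span ℤ Iα := by
  classical
  -- positivity of inner squares of roots
  have hΔ0 : ∀ x ∈ Δ, (0:ℝ) < ⟪x, x⟫ := fun x hx =>
    lt_of_le_of_ne real_inner_self_nonneg fun h => hne x hx (inner_self_eq_zero.mp h.symm)
  -- Δ is symmetric
  have hneg : ∀ x ∈ Δ, -x ∈ Δ := by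
    intro x hx
    have h := hrefl x hx x hx
    have hxx : ⟪x, x⟫ ≠ (0:ℝ) := ne_of_gt (hΔ0 x hx)
    have h2 : 2 * ⟪x, x⟫ / ⟪x, x⟫ = (2:ℝ) := by
      rw [mul_div_assoc, div_self hxx, mul_one]
    rw [h2] at h
    have h3 : x - (2:ℝ) • x = -x := by
      rw [two_smul]; abel
    rwa [h3] at h
  -- if two roots have positive inner product and are distinct, their difference is a root
  have hsub : ∀ x ∈ Δ, ∀ y ∈ Δ, (0:ℝ) < ⟪x, y⟫ → x ≠ y → x - y ∈ Δ := by
    intro x hx y hy hxy hne'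
    obtain ⟨n, hn⟩ := hcrys y hy x hx
    obtain ⟨m, hm⟩ := hcrys x hx y hy
    have hyy := hΔ0 y hy
    have hxx := hΔ0 x hx
    have hyy' : ⟪y, y⟫ ≠ (0:ℝ) := ne_of_gt hyy
    have hxx' : ⟪x, x⟫ ≠ (0:ℝ) := ne_of_gt hxx
    have hyx : ⟪y, x⟫ = ⟪x, y⟫ := real_inner_comm x y
    have hn1 : 1 ≤ n := by
      have h1 : (0:ℝ) < (n:ℝ) := by rw [← hn, hyx]; exact div_pos (by linarith) hyy
      have h2 : (0:ℤ) < n := by exact_mod_cast h1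
      omega
    have hm1 : 1 ≤ m := by
      have h1 : (0:ℝ) < (m:ℝ) := by rw [← hm]; exact div_pos (by linarith) hxx
      have h2 : (0:ℤ) < m := by exact_mod_cast h1
      omega
    by_cases hn' : n = 1
    · have h := hrefl y hy x hx
      rw [hn, hn'] at h
      simpa using h
    · by_cases hm' : m = 1
      · have h := hrefl x hx y hy
        rw [hm, hm'] at h
        have h2 := hneg _ h
        simpa [neg_sub] using h2
      · exfalso
        have h2n : 2 ≤ n := by omega
        have h2m : 2 ≤ m := by omega
        have hne1 : 2 * ⟪y, x⟫ = (n:ℝ) * ⟪y, y⟫ := by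
          rw [div_eq_iff hyy'] at hn; linarith [hn]
        have hme1 : 2 * ⟪x, y⟫ = (m:ℝ) * ⟪x, x⟫ := by
          rw [div_eq_iff hxx'] at hm; linarith [hm]
        have hge1 : ⟪y, y⟫ ≤ ⟪x, y⟫ := by
          have h2n' : (2:ℝ) ≤ (n:ℝ) := by exact_mod_cast h2n
          nlinarith [hne1, hyx]
        have hge2 : ⟪x, x⟫ ≤ ⟪x, y⟫ := by
          have h2m' : (2:ℝ) ≤ (m:ℝ) := by exact_mod_cast h2m
          nlinarith [hme1]
        have hexp : ⟪x - y, x - y⟫ = ⟪x, x⟫ - 2 * ⟪x, y⟫ + ⟪y, y⟫ :=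
          real_inner_sub_sub_self x y
        have hle : ⟪x - y, x - y⟫ ≤ 0 := by rw [hexp]; linarith
        have hge : (0:ℝ) ≤ ⟪x - y, x - y⟫ := real_inner_self_nonneg
        have : x - y = 0 := by
          have : ⟪x - y, x - y⟫ = (0:ℝ) := le_antisymm hle hge
          exact inner_self_eq_zero.mp this
        exact hne' (sub_eq_zero.mp this)
  -- if two roots have negative inner product and don't sum to zero, their sum is a root
  have hadd : ∀ x ∈ Δ, ∀ y ∈ Δ, ⟪x, y⟫ < 0 → x + y ≠ 0 → x + y ∈ Δ := by
    intro x hx y hy hxy hne'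
    have h := hsub x hx (-y) (hneg y hy) (by rw [inner_neg_right]; linarith)
      (by intro h; exact hne' (by rw [h]; abel))
    simpa [sub_neg_eq_add] using h
  -- uniqueness of coefficients
  have huniq0 : ∀ f : E → ℝ, (∑ a ∈ SR, f a • a) = 0 → ∀ a ∈ SR, f a = 0 := by
    intro f hf a ha
    have hsum : ∑ i ∈ Finset.univ, f (i : SR) • ((i : SR) : E) = 0 := by
      rw [Finset.univ_eq_attach, Finset.sum_attach SR (fun x => f x • x)]
      exact hf
    exact linearIndependent_iff'.mp hli Finset.univ (fun i => f i) hsum ⟨a, ha⟩ (Finset.mem_univ _)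
  have huniqZ : ∀ c d : E → ℤ, (∑ a ∈ SR, (c a : ℝ) • a) = (∑ a ∈ SR, (d a : ℝ) • a) →
      ∀ a ∈ SR, c a = d a := by
    intro c d hcd a ha
    have h := huniq0 (fun x => (c x : ℝ) - (d x : ℝ))
      (by simp only [sub_smul, Finset.sum_sub_distrib, hcd, sub_self]) a ha
    have h' : (c a : ℝ) - (d a : ℝ) = 0 := h
    have : (c a : ℝ) = (d a : ℝ) := by linarith
    exact_mod_cast this
  have hposD : ∀ x ∈ Δpos, x ∈ Δ := fun x hx => ((hΔpos x).mp hx).1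
  -- sum of two positive roots is nonzero
  have hne0sum : ∀ x ∈ Δpos, ∀ y ∈ Δpos, x + y ≠ 0 := by
    intro x hx y hy h0
    obtain ⟨hxΔ, c, hxc, hcn⟩ := (hΔpos x).mp hx
    obtain ⟨hyΔ, d, hyd, hdn⟩ := (hΔpos y).mp hy
    have hsum : (∑ a ∈ SR, ((c a + d a : ℤ) : ℝ) • a) = ∑ a ∈ SR, ((0:ℤ) : ℝ) • a := by
      push_cast
      simp only [add_smul, Finset.sum_add_distrib, ← hxc, ← hyd, h0]
      simp
    have hz := huniqZ _ _ hsum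
    have hcz : ∀ a ∈ SR, c a = 0 := by
      intro a ha
      have h3 : c a + d a = 0 := hz a ha
      have h1 := hcn a ha
      have h2 := hdn a ha
      omega
    apply hne x hxΔ
    rw [hxc]
    refine Finset.sum_eq_zero fun a ha => ?_
    rw [hcz a ha]
    simp
  -- sum of two positive roots, if a root, is positive
  have hsumpos : ∀ x ∈ Δpos, ∀ y ∈ Δpos, x + y ∈ Δ → x + y ∈ Δpos := by
    intro x hx y hy hΔ'
    obtain ⟨hxΔ, c, hxc, hcn⟩ := (hΔpos x).mp hx
    obtain ⟨hyΔ, d, hyd, hdn⟩ := (hΔpos y).mp hy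
    refine (hΔpos _).mpr ⟨hΔ', fun a => c a + d a, ?_, fun a ha => ?_⟩
    · push_cast
      simp only [add_smul, Finset.sum_add_distrib, ← hxc, ← hyd]
    · show 0 ≤ c a + d a
      have h1 := hcn a ha
      have h2 := hdn a ha
      omega
  -- the key lemma: I_{β - d} ⊆ span ℤ I_β, for d, β, β - d positive roots
  have hX : ∀ β ∈ Δpos, ∀ d ∈ Δpos, β - d ∈ Δpos →
      ∀ μ ∈ ({β - d} ∪ {x : E | x ∈ Δpos ∧ (β - d) - x ∈ Δpos} : Set E),
      μ ∈ Submodule.span ℤ ({β} ∪ {x : E | x ∈ Δpos ∧ β - x ∈ Δpos} : Set E) := by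
    intro β hβ d hd hβd μ hμ
    have hdspan : d ∈ Submodule.span ℤ ({β} ∪ {x : E | x ∈ Δpos ∧ β - x ∈ Δpos} : Set E) :=
      Submodule.subset_span (Or.inr ⟨hd, hβd⟩)
    have hβ'span : β - d ∈ Submodule.span ℤ ({β} ∪ {x : E | x ∈ Δpos ∧ β - x ∈ Δpos} : Set E) :=
      Submodule.subset_span (Or.inr ⟨hβd, by rwa [sub_sub_cancel]⟩)
    rcases hμ with hμ | ⟨hμp, hνp⟩
    · rw [Set.mem_singleton_iff] at hμ
      rw [hμ]; exact hβ'span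
    · set ν := β - d - μ with hν
      have hμΔ := hposD μ hμp
      have hνΔ := hposD ν hνp
      have hβΔ := hposD β hβ
      have hdΔ := hposD d hd
      by_cases h1 : β - μ ∈ Δ
      · have heq : β - μ = ν + d := by rw [hν]; abel
        have : β - μ ∈ Δpos := by
          rw [heq]; exact hsumpos ν hνp d hd (heq ▸ h1)
        exact Submodule.subset_span (Or.inr ⟨hμp, this⟩)
      · by_cases h2 : μ + d ∈ Δ
        · have hmd : μ + d ∈ Δpos := hsumpos μ hμp d hd h2
          have hmem : μ + d ∈ Submodule.span ℤ
              ({β} ∪ {x : E | x ∈ Δpos ∧ β - x ∈ Δpos} : Set E) :=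
            Submodule.subset_span (Or.inr ⟨hmd, by
              have : β - (μ + d) = ν := by rw [hν]; abel
              rwa [this]⟩)
          have := sub_mem hmem hdspan
          simpa using this
        · exfalso
          have hdm : (0:ℝ) ≤ ⟪d, μ⟫ := by
            by_contra hlt
            push_neg at hlt
            exact h2 (hadd μ hμΔ d hdΔ (by rwa [real_inner_comm]) (hne0sum μ hμp d hd))
          have hdν : (0:ℝ) ≤ ⟪d, ν⟫ := by
            by_contra hlt
            push_neg at hlt
            have h := hadd ν hνΔ d hdΔ (by rwa [real_inner_comm]) (hne0sum ν hνp d hd)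
            have : ν + d = β - μ := by rw [hν]; abel
            exact h1 (this ▸ h)
          have hμν : μ + ν = β - d := by rw [hν]; abel
          have hsplit : ⟪β - d, μ⟫ + ⟪β - d, ν⟫ = ⟪β - d, β - d⟫ := by
            rw [← inner_add_right, hμν]
          have hpos : (0:ℝ) < ⟪β - d, β - d⟫ := hΔ0 _ (hposD _ hβd)
          have hsub1 : ⟪β - d, μ⟫ = ⟪β, μ⟫ - ⟪d, μ⟫ := by rw [inner_sub_left]
          have hsub2 : ⟪β - d, ν⟫ = ⟪β, ν⟫ - ⟪d, ν⟫ := by rw [inner_sub_left]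
          by_cases hcase : (0:ℝ) < ⟪β - d, μ⟫
          · have hβμ : (0:ℝ) < ⟪β, μ⟫ := by rw [hsub1] at hcase; linarith
            have hneq : β ≠ μ := by
              intro h
              apply hne0sum ν hνp d hd
              rw [hν, h]; abel
            exact h1 (hsub β hβΔ μ hμΔ hβμ hneq)
          · have hcase2 : (0:ℝ) < ⟪β - d, ν⟫ := by
              push_neg at hcase; linarith
            have hβν : (0:ℝ) < ⟪β, ν⟫ := by rw [hsub2] at hcase2; linarith
            have hneq : β ≠ ν := by
              intro h
              apply hne0sum μ hμp d hd
              have : μ + d = β - ν := by rw [hν]; abel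
              rw [this, ← h]; abel
            have h := hsub β hβΔ ν hνΔ hβν hneq
            have : β - ν = μ + d := by rw [hν]; abel
            exact h2 (this ▸ h)
  -- main induction on height
  have hMAIN : ∀ N : ℕ, ∀ β, β ∈ Δpos → ∀ c : E → ℤ, β = ∑ a ∈ SR, (c a : ℝ) • a →
      (∀ a ∈ SR, 0 ≤ c a) → (∑ a ∈ SR, c a) = (N : ℤ) → ∀ δ ∈ SR, 0 < c δ →
      δ ∈ Submodule.span ℤ ({β} ∪ {x : E | x ∈ Δpos ∧ β - x ∈ Δpos} : Set E) := by
    intro N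
    induction N using Nat.strong_induction_on with
    | _ N ih =>
      intro β hβ c hβc hcn hcN δ hδSR hcδ
      by_cases hβSR : β ∈ SR
      · -- β is simple, so δ = β
        have hind : (∑ a ∈ SR, ((if a = β then (1:ℤ) else 0 : ℤ) : ℝ) • a) = β := by
          rw [Finset.sum_eq_single_of_mem β hβSR (fun b _ hbne => by simp [hbne])]
          simp
        have h : c δ = if δ = β then (1:ℤ) else 0 :=
          huniqZ c (fun a => if a = β then (1:ℤ) else 0) (hβc.symm.trans hind.symm) δ hδSR
        have hδβ : δ = β := by
          by_contra hne''
          rw [if_neg hne''] at h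
          omega
        rw [hδβ]
        exact Submodule.subset_span (Or.inl rfl)
      · -- β is not simple: find δ0 simple with c δ0 > 0 and ⟪β, δ0⟫ > 0
        have hβΔ := hposD β hβ
        have h0 : (0:ℝ) < ⟪β, β⟫ := hΔ0 β hβΔ
        have hexp : ⟪β, β⟫ = ∑ a ∈ SR, (c a : ℝ) * ⟪β, a⟫ := by
          conv_lhs => rw [show ⟪β, β⟫ = ⟪β, ∑ a ∈ SR, (c a : ℝ) • a⟫ by rw [← hβc]]
          rw [inner_sum]
          exact Finset.sum_congr rfl fun a _ => real_inner_smul_right β a _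
        have hex : ∃ a ∈ SR, 0 < c a ∧ (0:ℝ) < ⟪β, a⟫ := by
          by_contra hcon
          push_neg at hcon
          have hle : ∑ a ∈ SR, (c a : ℝ) * ⟪β, a⟫ ≤ 0 := by
            refine Finset.sum_nonpos fun a ha => ?_
            rcases lt_or_eq_of_le (hcn a ha) with hlt | heq
            · have := hcon a ha hlt
              have hca : (0:ℝ) ≤ (c a : ℝ) := by exact_mod_cast le_of_lt hlt
              exact mul_nonpos_of_nonneg_of_nonpos hca this
            · rw [← heq]; simp
          linarith [hexp ▸ h0]
        obtain ⟨δ0, hδ0SR, hcδ0, hip⟩ := hex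
        have hδ0Δ : δ0 ∈ Δ := hSRΔ hδ0SR
        have hβδ0 : β ≠ δ0 := fun h => hβSR (h ▸ hδ0SR)
        have hβ'Δ : β - δ0 ∈ Δ := hsub β hβΔ δ0 hδ0Δ hip hβδ0
        set c' : E → ℤ := fun a => c a - (if a = δ0 then 1 else 0) with hc'def
        have hsumδ0 : (∑ a ∈ SR, ((if a = δ0 then (1:ℤ) else 0 : ℤ) : ℝ) • a) = δ0 := by
          rw [Finset.sum_eq_single_of_mem δ0 hδ0SR (fun b _ hbne => by simp [hbne])]
          simp
        have hβ'c : β - δ0 = ∑ a ∈ SR, (c' a : ℝ) • a := by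
          simp only [hc'def, Int.cast_sub, sub_smul, Finset.sum_sub_distrib]
          rw [← hβc, hsumδ0]
        have hc'n : ∀ a ∈ SR, 0 ≤ c' a := by
          intro a ha
          have hca := hcn a ha
          simp only [hc'def]
          by_cases h : a = δ0
          · rw [if_pos h, h]; omega
          · rw [if_neg h]; omega
        have hβ'pos : β - δ0 ∈ Δpos := (hΔpos _).mpr ⟨hβ'Δ, c', hβ'c, hc'n⟩
        have hδ0pos : δ0 ∈ Δpos := (hΔpos _).mpr ⟨hδ0Δ, fun a => if a = δ0 then 1 else 0,
          hsumδ0.symm, fun a ha => by by_cases h : a = δ0 <;> simp [h]⟩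
        have hN1 : 1 ≤ N := by
          have hge : (1:ℤ) ≤ ∑ a ∈ SR, c a := by
            calc (1:ℤ) ≤ c δ0 := hcδ0
            _ ≤ ∑ a ∈ SR, c a := Finset.single_le_sum (fun a ha => hcn a ha) hδ0SR
          rw [hcN] at hge
          exact_mod_cast hge
        have hc'N : (∑ a ∈ SR, c' a) = ((N - 1 : ℕ) : ℤ) := by
          simp only [hc'def, Finset.sum_sub_distrib]
          rw [hcN, Finset.sum_ite_eq' SR δ0 (fun _ => (1:ℤ)), if_pos hδ0SR]
          push_cast [Nat.cast_sub hN1]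
          ring
        by_cases hδδ0 : δ = δ0
        · rw [hδδ0]
          exact Submodule.subset_span (Or.inr ⟨hδ0pos, hβ'pos⟩)
        · have hcδ' : 0 < c' δ := by
            simp only [hc'def, if_neg hδδ0]
            omega
          have hrec := ih (N - 1) (by omega) (β - δ0) hβ'pos c' hβ'c hc'n hc'N δ hδSR hcδ'
          have hsubset : Submodule.span ℤ
              ({β - δ0} ∪ {x : E | x ∈ Δpos ∧ (β - δ0) - x ∈ Δpos} : Set E) ≤
              Submodule.span ℤ ({β} ∪ {x : E | x ∈ Δpos ∧ β - x ∈ Δpos} : Set E) := by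
            rw [Submodule.span_le]
            intro μ hμ
            exact hX β hβ δ0 hδ0pos hβ'pos μ hμ
          exact hsubset hrec
  -- assemble
  intro δ hδSR hkδ
  obtain ⟨hαΔ, k0, hk0, hk0n⟩ := (hΔpos α).mp hα
  have hkk0 : ∀ a ∈ SR, k a = k0 a := huniqZ k k0 (hk ▸ hk0) -- note: hk : α = ∑ k, hk0 : α = ∑ k0
  have hk0δ : 0 < k0 δ := by rw [← hkk0 δ hδSR]; exact hkδ
  have hNn : (0:ℤ) ≤ ∑ a ∈ SR, k0 a := Finset.sum_nonneg hk0n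
  have hNdef : (∑ a ∈ SR, k0 a) = (((∑ a ∈ SR, k0 a).toNat : ℕ) : ℤ) :=
    (Int.toNat_of_nonneg hNn).symm
  rw [hIα]
  exact hMAIN (∑ a ∈ SR, k0 a).toNat α hα k0 hk0 hk0n hNdef δ hδSR hk0δ
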